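/- Suppose T(f,u) ≤ C₁|log u|^γ u^{-a} for u ∈ (0,1/2) and T(f,u) ≤ C₂·exp(−C₃·u^{1/β}) for u ≥ 1/2, with a ≥ 1, γ ≥ 0, β > 0. Then for all p > a, ‖f‖_{L^p} ≤ C·(p−a)^{−(γ+1)} for p near a and ‖f‖_{L^p} ≤ C·p^β for large p; that is, f ∈ G(a,∞; γ+1, −β). -/

import Mathlib

open MeasureTheory Set
open scoped ENNReal NNReal
set_option maxHeartbeats 1000000

/-- `y^m e^{-y} ≤ (m/e)^m` for `m, y ≥ 0`. -/
lemma aux_rpow_exp_le (m : ℝ) (hm : 0 ≤ m) (y : ℝ) (hy : 0 ≤ y) :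
    y ^ m * Real.exp (-y) ≤ (m / Real.exp 1) ^ m := by
  rcases eq_or_lt_of_le hm with rfl | hm'
  · simpa using Real.exp_le_one_iff.mpr (by linarith : -y ≤ 0)
  rcases eq_or_lt_of_le hy with rfl | hy'
  · rw [Real.zero_rpow hm'.ne', zero_mul]
    exact Real.rpow_nonneg (div_nonneg hm (Real.exp_pos 1).le) m
  have hlog := Real.log_le_sub_one_of_pos (div_pos hy' hm')
  rw [Real.log_div hy'.ne' hm'.ne'] at hlog
  have key : m * Real.log y - y ≤ (Real.log m - 1) * m := by
    have h2 := mul_le_mul_of_nonneg_left hlog hm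
    have h3 : m * (y / m - 1) = y - m := by field_simp
    nlinarith
  have hme : 0 < m / Real.exp 1 := div_pos hm' (Real.exp_pos 1)
  rw [Real.rpow_def_of_pos hy', Real.rpow_def_of_pos hme, ← Real.exp_add]
  apply Real.exp_le_exp.mpr
  rw [Real.log_div hm'.ne' (Real.exp_pos 1).ne', Real.log_exp]
  linarith [key]

/-- `x^m e^{-cx} ≤ (m/(ec))^m` for `c > 0`, `m, x ≥ 0`. -/
lemma aux_rpow_exp_le' (c : ℝ) (hc : 0 < c) (m : ℝ) (hm : 0 ≤ m) (x : ℝ) (hx : 0 ≤ x) :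
    x ^ m * Real.exp (-(c * x)) ≤ (m / (Real.exp 1 * c)) ^ m := by
  have h1 : (c * x) ^ m * Real.exp (-(c * x)) ≤ (m / Real.exp 1) ^ m :=
    aux_rpow_exp_le m hm (c * x) (mul_nonneg hc.le hx)
  rw [Real.mul_rpow hc.le hx] at h1
  have hcm : 0 < c ^ m := Real.rpow_pos_of_pos hc m
  have h2 : x ^ m * Real.exp (-(c * x)) ≤ (m / Real.exp 1) ^ m / c ^ m := by
    rw [le_div_iff₀ hcm]
    calc x ^ m * Real.exp (-(c * x)) * c ^ m
        = c ^ m * x ^ m * Real.exp (-(c * x)) := by ring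
      _ ≤ (m / Real.exp 1) ^ m := h1
  calc x ^ m * Real.exp (-(c * x)) ≤ (m / Real.exp 1) ^ m / c ^ m := h2
    _ = (m / (Real.exp 1 * c)) ^ m := by
        rw [← Real.div_rpow (div_nonneg hm (Real.exp_pos 1).le) hc.le, div_div]

/-- `p^(1/p) ≤ e` for `p ≥ 1`. -/
lemma aux_rpow_inv_le_exp_one (p : ℝ) (hp : 1 ≤ p) : p ^ (1 / p) ≤ Real.exp 1 := by
  have hp0 : 0 < p := lt_of_lt_of_le one_pos hp
  have h1 : Real.log p ≤ p - 1 := Real.log_le_sub_one_of_pos hp0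
  rw [Real.rpow_def_of_pos hp0]
  apply Real.exp_le_exp.mpr
  have : Real.log p * (1 / p) ≤ (p - 1) / p := by
    rw [mul_one_div]
    gcongr
  have h2 : (p - 1) / p ≤ 1 := by
    rw [div_le_one hp0]; linarith
  linarith

/-- `x^(1/p) ≤ max x 1` for `x ≥ 0`, `p ≥ 1`. -/
lemma aux_rpow_inv_le_max (x p : ℝ) (hx : 0 ≤ x) (hp : 1 ≤ p) : x ^ (1 / p) ≤ max x 1 := by
  have hp0 : 0 < p := lt_of_lt_of_le one_pos hp
  have hinv : 1 / p ≤ 1 := by rw [div_le_one hp0]; linarith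
  rcases le_or_gt x 1 with h | h
  · exact le_max_of_le_right (Real.rpow_le_one hx h (by positivity))
  · exact le_max_of_le_left
      ((Real.rpow_le_rpow_left_iff h).mpr hinv |>.trans_eq (Real.rpow_one x))

lemma aux_int1 (K ε : ℝ) (hK : 0 ≤ K) (hε : 0 < ε) :
    ∫⁻ t in Ioo (0:ℝ) (1/2), ENNReal.ofReal (K * t ^ (ε - 1)) ≤ ENNReal.ofReal (K * ε⁻¹) := by
  have hbase : IntegrableOn (fun t : ℝ => t ^ (ε - 1)) (Ioo 0 (1/2)) := by
    have h := intervalIntegral.intervalIntegrable_rpow' (a := 0) (b := 1/2) (r := ε - 1)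
      (by linarith)
    rw [intervalIntegrable_iff, uIoc_of_le (by norm_num : (0:ℝ) ≤ 1/2)] at h
    exact h.mono_set Ioo_subset_Ioc_self
  have hint : IntegrableOn (fun t : ℝ => K * t ^ (ε - 1)) (Ioo 0 (1/2)) := hbase.const_mul K
  rw [← ofReal_integral_eq_lintegral_ofReal hint ?_]
  · apply ENNReal.ofReal_le_ofReal
    have hval : ∫ t in Ioo (0:ℝ) (1/2), t ^ (ε - 1) = ((1/2:ℝ) ^ ε - 0 ^ ε) / ε := by
      rw [← integral_Ioc_eq_integral_Ioo, ← intervalIntegral.integral_of_le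
        (by norm_num : (0:ℝ) ≤ 1/2), integral_rpow (Or.inl (by linarith))]
      norm_num
    rw [integral_const_mul, hval, Real.zero_rpow hε.ne', sub_zero]
    have h1 : (1/2:ℝ) ^ ε ≤ 1 := Real.rpow_le_one (by norm_num) (by norm_num) hε.le
    have h2 : (1/2:ℝ) ^ ε / ε ≤ ε⁻¹ := by
      rw [div_le_iff₀ hε]
      calc (1/2:ℝ) ^ ε ≤ 1 := h1
        _ = ε⁻¹ * ε := by field_simp
    exact mul_le_mul_of_nonneg_left h2 hK
  · filter_upwards [self_mem_ae_restrict measurableSet_Ioo] with t ht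
    exact mul_nonneg hK (Real.rpow_nonneg ht.1.le _)

lemma aux_int2 (K : ℝ) (hK : 0 ≤ K) :
    ∫⁻ t in Ici (1/2:ℝ), ENNReal.ofReal (K * t ^ (-2:ℝ)) ≤ ENNReal.ofReal (K * 2) := by
  rw [setLIntegral_congr (Ioi_ae_eq_Ici (a := (1/2:ℝ))).symm]
  have hint : IntegrableOn (fun t : ℝ => K * t ^ (-2:ℝ)) (Ioi (1/2:ℝ)) :=
    (integrableOn_Ioi_rpow_of_lt (by norm_num) (by norm_num)).const_mul K
  rw [← ofReal_integral_eq_lintegral_ofReal hint ?_]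
  · apply ENNReal.ofReal_le_ofReal
    rw [integral_const_mul, integral_Ioi_rpow_of_lt (by norm_num) (by norm_num)]
    have : -((1/2:ℝ) ^ ((-2:ℝ) + 1)) / (-2 + 1) = 2 := by
      norm_num [Real.rpow_neg_one]
    rw [this]
  · filter_upwards [self_mem_ae_restrict measurableSet_Ioi] with t ht
    exact mul_nonneg hK (Real.rpow_nonneg (by linarith [mem_Ioi.mp ht] : (0:ℝ) ≤ t) _)

/-- Tail bounds `T(f,u) ≤ C₁ |log u|^γ u^{-a}` near `0` and
`T(f,u) ≤ C₂ exp(-C₃ u^{1/β})` near `∞` imply `f ∈ G(a,∞; γ+1, -β)`. -/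
theorem tail_to_moment_exp {X : Type*} [MeasurableSpace X] (μ : Measure X)
    (a γ β : ℝ) (ha : 1 ≤ a) (hγ : 0 ≤ γ) (hβ : 0 < β)
    (C₁ C₂ C₃ : ℝ) (hC₁ : 0 < C₁) (hC₂ : 0 < C₂) (hC₃ : 0 < C₃)
    (f : X → ℝ) (hf : Measurable f)
    (htail₀ : ∀ u : ℝ, 0 < u → u < 1 / 2 →
      μ {x | u < |f x|} ≤ ENNReal.ofReal (C₁ * |Real.log u| ^ γ * u ^ (-a)))
    (htailInf : ∀ u : ℝ, 1 / 2 ≤ u →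
      μ {x | u < |f x|} ≤ ENNReal.ofReal (C₂ * Real.exp (-C₃ * u ^ (1 / β)))) :
    ∃ C : ℝ, 0 < C ∧ ∀ p : ℝ, a < p →
      eLpNorm f (ENNReal.ofReal p) μ ≤
        ENNReal.ofReal (C * max ((p - a) ^ (-(γ + 1))) (p ^ β)) := by
  have he1 : (0:ℝ) < Real.exp 1 := Real.exp_pos 1
  set A : ℝ := 2 * C₁ * (2 * γ / Real.exp 1) ^ γ with hA
  set D : ℝ := (4 * β / (Real.exp 1 * C₃)) ^ (2 * β) with hD
  set K₀ : ℝ := max 1 (2 * β / (Real.exp 1 * C₃)) with hK₀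
  clear_value A D K₀
  have hA0 : 0 ≤ A := by rw [hA]; positivity
  have hD0 : 0 < D := by rw [hD]; positivity
  have hK₀1 : 1 ≤ K₀ := by rw [hK₀]; exact le_max_left _ _
  have hK₀0 : 0 < K₀ := lt_of_lt_of_le one_pos hK₀1
  have hmaxA0 : 0 < max A 1 := lt_of_lt_of_le one_pos (le_max_right _ _)
  have hmaxB0 : 0 < max (2 * C₂ * D) 1 := lt_of_lt_of_le one_pos (le_max_right _ _)
  refine ⟨2 * Real.exp 1 * (max A 1 + max (2 * C₂ * D) 1 * K₀ ^ β), by positivity, ?_⟩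
  intro p hp
  have hp1 : 1 < p := lt_of_le_of_lt ha hp
  have hp0 : 0 < p := by linarith
  have hpa : 0 < p - a := by linarith
  set ε : ℝ := (p - a) / 2 with hε
  have hε0 : 0 < ε := by positivity
  set c : ℝ := C₃ / 2 with hc
  clear_value ε c
  have hc0 : 0 < c := by rw [hc]; positivity
  set M : ℝ := max ((p - a) ^ (-(γ + 1))) (p ^ β) with hM
  have hpβ1 : 1 ≤ p ^ β := by
    calc (1:ℝ) = p ^ (0:ℝ) := (Real.rpow_zero p).symm
      _ ≤ p ^ β := Real.rpow_le_rpow_of_exponent_le hp1.le hβ.le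
  have hM1 : 1 ≤ M := by rw [hM]; exact le_max_of_le_right hpβ1
  have hM0 : 0 < M := lt_of_lt_of_le one_pos hM1
  set R₁ : ℝ := C₁ * (γ / (Real.exp 1 * ε)) ^ γ * ε⁻¹ with hR₁
  set R₂ : ℝ := C₂ * D * (K₀ * p) ^ (β * p) * 2 with hR₂
  clear_value M R₁ R₂
  have hR₁0 : 0 ≤ R₁ := by rw [hR₁]; positivity
  have hR₂0 : 0 < R₂ := by rw [hR₂]; positivity
  have hmax0 : 0 ≤ max R₁ R₂ := le_trans hR₁0 (le_max_left _ _)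
  -- pointwise bound near zero
  have hb1 : ∀ t ∈ Ioo (0:ℝ) (1/2),
      μ {x | t < |f x|} * ENNReal.ofReal (t ^ (p - 1)) ≤
        ENNReal.ofReal (C₁ * (γ / (Real.exp 1 * ε)) ^ γ * t ^ (ε - 1)) := by
    rintro t ⟨ht0, ht2⟩
    calc μ {x | t < |f x|} * ENNReal.ofReal (t ^ (p - 1))
        ≤ ENNReal.ofReal (C₁ * |Real.log t| ^ γ * t ^ (-a)) * ENNReal.ofReal (t ^ (p - 1)) :=
          mul_le_mul_left (htail₀ t ht0 ht2) _
      _ = ENNReal.ofReal (C₁ * |Real.log t| ^ γ * t ^ (-a) * t ^ (p - 1)) :=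
          (ENNReal.ofReal_mul (by positivity)).symm
      _ ≤ ENNReal.ofReal (C₁ * (γ / (Real.exp 1 * ε)) ^ γ * t ^ (ε - 1)) := by
          apply ENNReal.ofReal_le_ofReal
          have hlog : Real.log t < 0 := Real.log_neg ht0 (by linarith)
          have hkey : (-Real.log t) ^ γ * t ^ ε ≤ (γ / (Real.exp 1 * ε)) ^ γ := by
            have h := aux_rpow_exp_le' ε hε0 γ hγ (-Real.log t) (by linarith)
            rwa [show -(ε * -Real.log t) = Real.log t * ε by ring,
              ← Real.rpow_def_of_pos ht0] at h
          have hsplit : t ^ (-a) * t ^ (p - 1) = t ^ ε * t ^ (ε - 1) := by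
            rw [← Real.rpow_add ht0, ← Real.rpow_add ht0]
            congr 1
            rw [hε]; ring
          rw [abs_of_neg hlog]
          calc C₁ * (-Real.log t) ^ γ * t ^ (-a) * t ^ (p - 1)
              = C₁ * (-Real.log t) ^ γ * (t ^ (-a) * t ^ (p - 1)) := by ring
            _ = C₁ * ((-Real.log t) ^ γ * t ^ ε) * t ^ (ε - 1) := by rw [hsplit]; ring
            _ ≤ C₁ * (γ / (Real.exp 1 * ε)) ^ γ * t ^ (ε - 1) := by
                have ht1 : (0:ℝ) ≤ t ^ (ε - 1) := Real.rpow_nonneg ht0.le _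
                have h2 := mul_le_mul_of_nonneg_left hkey hC₁.le
                nlinarith
  -- pointwise bound near infinity
  have hb2 : ∀ t ∈ Ici (1/2:ℝ),
      μ {x | t < |f x|} * ENNReal.ofReal (t ^ (p - 1)) ≤
        ENNReal.ofReal (C₂ * D * (K₀ * p) ^ (β * p) * t ^ (-2:ℝ)) := by
    intro t ht
    have ht0 : (0:ℝ) < t := lt_of_lt_of_le (by norm_num) ht
    calc μ {x | t < |f x|} * ENNReal.ofReal (t ^ (p - 1))
        ≤ ENNReal.ofReal (C₂ * Real.exp (-C₃ * t ^ (1/β))) * ENNReal.ofReal (t ^ (p - 1)) :=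
          mul_le_mul_left (htailInf t ht) _
      _ = ENNReal.ofReal (C₂ * Real.exp (-C₃ * t ^ (1/β)) * t ^ (p - 1)) :=
          (ENNReal.ofReal_mul (by positivity)).symm
      _ ≤ ENNReal.ofReal (C₂ * D * (K₀ * p) ^ (β * p) * t ^ (-2:ℝ)) := by
          apply ENNReal.ofReal_le_ofReal
          set v : ℝ := t ^ (1/β) with hv
          clear_value v
          have hv0 : 0 < v := by rw [hv]; positivity
          have hfact : ∀ q : ℝ, t ^ q = v ^ (β * q) := by
            intro q
            rw [hv, ← Real.rpow_mul ht0.le]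
            congr 1
            field_simp
          have hE : Real.exp (-C₃ * v) = Real.exp (-(c * v)) * Real.exp (-(c * v)) := by
            rw [← Real.exp_add]
            congr 1
            rw [hc]; ring
          have hone : t ^ (2:ℝ) * t ^ (-2:ℝ) = 1 := by
            rw [← Real.rpow_add ht0]
            norm_num
          have h1 : t ^ (p - 1) * Real.exp (-(c * v)) ≤ (K₀ * p) ^ (β * p) := by
            rw [hfact (p - 1)]
            refine (aux_rpow_exp_le' c hc0 (β * (p - 1)) (by nlinarith) v hv0.le).trans ?_
            set Q : ℝ := β * (p - 1) / (Real.exp 1 * c) with hQ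
            clear_value Q
            have hQ0 : 0 ≤ Q := by rw [hQ]; exact div_nonneg (by nlinarith) (by positivity)
            have hQle : Q ≤ K₀ * p := by
              have h2 : 2 * β / (Real.exp 1 * C₃) ≤ K₀ := by rw [hK₀]; exact le_max_right _ _
              have h3 : Q = (2 * β / (Real.exp 1 * C₃)) * (p - 1) := by
                rw [hQ, hc]; field_simp
              rw [h3]
              nlinarith [mul_le_mul_of_nonneg_right h2 (by linarith : (0:ℝ) ≤ p - 1)]
            have hKp1 : 1 ≤ K₀ * p := by nlinarith
            rcases le_or_gt Q 1 with hQ1 | hQ1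
            · calc Q ^ (β * (p - 1)) ≤ 1 := Real.rpow_le_one hQ0 hQ1 (by nlinarith)
                _ = (K₀ * p) ^ (0:ℝ) := (Real.rpow_zero _).symm
                _ ≤ (K₀ * p) ^ (β * p) :=
                    Real.rpow_le_rpow_of_exponent_le hKp1 (by positivity)
            · calc Q ^ (β * (p - 1)) ≤ Q ^ (β * p) :=
                    Real.rpow_le_rpow_of_exponent_le hQ1.le (by nlinarith)
                _ ≤ (K₀ * p) ^ (β * p) := Real.rpow_le_rpow hQ0 hQle (by positivity)
          have h2 : t ^ (2:ℝ) * Real.exp (-(c * v)) ≤ D := by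
            rw [hfact 2]
            refine (aux_rpow_exp_le' c hc0 (β * 2) (by positivity) v hv0.le).trans ?_
            apply le_of_eq
            rw [hD, hc]
            congr 1
            · field_simp; ring
            · ring
          have hnn1 : (0:ℝ) ≤ t ^ (p - 1) * Real.exp (-(c * v)) := by positivity
          have hnn2 : (0:ℝ) ≤ t ^ (2:ℝ) * Real.exp (-(c * v)) := by positivity
          have hnnt : (0:ℝ) ≤ t ^ (-2:ℝ) := Real.rpow_nonneg ht0.le _
          calc C₂ * Real.exp (-C₃ * v) * t ^ (p - 1)
              = C₂ * (t ^ (p - 1) * Real.exp (-(c * v))) *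
                  ((t ^ (2:ℝ) * Real.exp (-(c * v))) * t ^ (-2:ℝ)) := by
                rw [hE]
                linear_combination
                  (-(C₂ * t ^ (p - 1) * Real.exp (-(c * v)) * Real.exp (-(c * v)))) * hone
            _ ≤ C₂ * ((K₀ * p) ^ (β * p)) * (D * t ^ (-2:ℝ)) := by
                have hKp0 : (0:ℝ) ≤ (K₀ * p) ^ (β * p) := Real.rpow_nonneg (by positivity) _
                apply mul_le_mul (mul_le_mul_of_nonneg_left h1 hC₂.le)
                  (mul_le_mul_of_nonneg_right h2 hnnt) (by positivity) (by positivity)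
            _ = C₂ * D * (K₀ * p) ^ (β * p) * t ^ (-2:ℝ) := by ring
  -- integrate the tail bound
  have htot : (∫⁻ t in Ioi (0:ℝ), μ {x | t < |f x|} * ENNReal.ofReal (t ^ (p - 1)))
      ≤ ENNReal.ofReal (R₁ + R₂) := by
    rw [← Ioo_union_Ici_eq_Ioi (by norm_num : (0:ℝ) < 1/2)]
    refine (lintegral_union_le _ _ _).trans ?_
    rw [ENNReal.ofReal_add hR₁0 hR₂0.le, hR₁, hR₂]
    refine add_le_add ?_ ?_
    · exact (setLIntegral_mono' measurableSet_Ioo hb1).trans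
        (aux_int1 _ ε (by positivity) hε0)
    · exact (setLIntegral_mono' measurableSet_Ici hb2).trans
        (aux_int2 _ (by positivity))
  -- rewrite the Lp norm via the layer cake formula
  have hpne : (ENNReal.ofReal p) ≠ 0 := by
    simp only [ne_eq, ENNReal.ofReal_eq_zero, not_le]
    exact hp0
  rw [eLpNorm_eq_lintegral_rpow_enorm_toReal hpne ENNReal.ofReal_ne_top]
  simp only [ENNReal.toReal_ofReal hp0.le]
  have hrw : ∀ x : X, ‖f x‖ₑ ^ p = ENNReal.ofReal (|f x| ^ p) := fun x => by
    rw [Real.enorm_eq_ofReal_abs, ENNReal.ofReal_rpow_of_nonneg (abs_nonneg _) hp0.le]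
  simp only [hrw]
  have hlayer := lintegral_rpow_eq_lintegral_meas_lt_mul μ
    (f := fun x => |f x|) (ae_of_all μ fun x => abs_nonneg (f x)) (hf.abs.aemeasurable) hp0
  rw [hlayer]
  -- final real-number estimate
  have hR1eq : R₁ = A * (p - a) ^ (-(γ + 1)) := by
    have e1 : (γ / (Real.exp 1 * ε)) ^ γ = (2 * γ / Real.exp 1) ^ γ * (p - a) ^ (-γ) := by
      rw [show γ / (Real.exp 1 * ε) = (2 * γ / Real.exp 1) * (p - a)⁻¹ by
          rw [hε]; field_simp,
        Real.mul_rpow (by positivity) (by positivity),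
        Real.inv_rpow hpa.le, ← Real.rpow_neg hpa.le]
    have e2 : ε⁻¹ = 2 * (p - a) ^ (-1:ℝ) := by
      rw [Real.rpow_neg_one, hε]
      field_simp
    have e3 : (p - a) ^ (-γ) * (p - a) ^ (-1:ℝ) = (p - a) ^ (-(γ + 1)) := by
      rw [← Real.rpow_add hpa]
      congr 1
      ring
    rw [hR₁, e1, e2, hA]
    calc C₁ * ((2 * γ / Real.exp 1) ^ γ * (p - a) ^ (-γ)) * (2 * (p - a) ^ (-1:ℝ))
        = 2 * C₁ * (2 * γ / Real.exp 1) ^ γ * ((p - a) ^ (-γ) * (p - a) ^ (-1:ℝ)) := by ring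
      _ = 2 * C₁ * (2 * γ / Real.exp 1) ^ γ * (p - a) ^ (-(γ + 1)) := by rw [e3]
  have hR1root : R₁ ^ (1/p) ≤ max A 1 * M := by
    have hexp : ((p - a) ^ (-(γ + 1))) ^ (1/p) ≤ M := by
      rw [hM, ← Real.rpow_mul hpa.le]
      rcases le_or_gt (p - a) 1 with h | h
      · apply le_max_of_le_left
        apply Real.rpow_le_rpow_of_exponent_ge hpa h
        have h2 : (γ + 1) * (1/p) ≤ γ + 1 := by
          rw [mul_one_div]
          exact div_le_self (by linarith) hp1.le
        nlinarith
      · apply le_max_of_le_right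
        calc (p - a) ^ (-(γ + 1) * (1/p)) ≤ 1 := by
              apply Real.rpow_le_one_of_one_le_of_nonpos h.le
              have h3 : (0:ℝ) ≤ (γ + 1) * (1/p) := by positivity
              nlinarith
          _ ≤ p ^ β := hpβ1
    rw [hR1eq, Real.mul_rpow hA0 (Real.rpow_nonneg hpa.le _)]
    exact mul_le_mul (aux_rpow_inv_le_max A p hA0 hp1.le) hexp
      (Real.rpow_nonneg (Real.rpow_nonneg hpa.le _) _) hmaxA0.le
  have hR2root : R₂ ^ (1/p) ≤ max (2 * C₂ * D) 1 * K₀ ^ β * M := by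
    have hR2eq : R₂ = (2 * C₂ * D) * (K₀ * p) ^ (β * p) := by rw [hR₂]; ring
    have hKp : ((K₀ * p) ^ (β * p)) ^ (1/p) = K₀ ^ β * p ^ β := by
      rw [← Real.rpow_mul (by positivity : (0:ℝ) ≤ K₀ * p)]
      rw [show β * p * (1/p) = β by field_simp]
      exact Real.mul_rpow hK₀0.le hp0.le
    rw [hR2eq, Real.mul_rpow (by positivity) (Real.rpow_nonneg (by positivity) _), hKp]
    have hx : (2 * C₂ * D) ^ (1/p) ≤ max (2 * C₂ * D) 1 :=
      aux_rpow_inv_le_max _ p (by positivity) hp1.le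
    have hy : p ^ β ≤ M := by rw [hM]; exact le_max_right _ _
    calc (2 * C₂ * D) ^ (1/p) * (K₀ ^ β * p ^ β)
        ≤ max (2 * C₂ * D) 1 * (K₀ ^ β * M) := by
          apply mul_le_mul hx (mul_le_mul_of_nonneg_left hy (by positivity))
            (by positivity) hmaxB0.le
      _ = max (2 * C₂ * D) 1 * K₀ ^ β * M := by ring
  have hmaxr : (max R₁ R₂) ^ (1/p) ≤ max A 1 * M + max (2 * C₂ * D) 1 * K₀ ^ β * M := by
    have ht1 : 0 ≤ max A 1 * M := by positivity
    have ht2 : 0 ≤ max (2 * C₂ * D) 1 * K₀ ^ β * M := by positivity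
    rcases max_cases R₁ R₂ with ⟨h, _⟩ | ⟨h, _⟩ <;> rw [h]
    · linarith [hR1root]
    · linarith [hR2root]
  have hfinal : (p * (R₁ + R₂)) ^ (1/p) ≤
      2 * Real.exp 1 * (max A 1 + max (2 * C₂ * D) 1 * K₀ ^ β) * M := by
    have h2e : (2:ℝ) ^ (1/p) ≤ 2 := by
      have := aux_rpow_inv_le_max 2 p (by norm_num) hp1.le
      simpa using this
    have hpe : p ^ (1/p) ≤ Real.exp 1 := aux_rpow_inv_le_exp_one p hp1.le
    calc (p * (R₁ + R₂)) ^ (1/p)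
        ≤ (2 * p * max R₁ R₂) ^ (1/p) := by
          apply Real.rpow_le_rpow (by positivity)
            (by nlinarith [le_max_left R₁ R₂, le_max_right R₁ R₂]) (by positivity)
      _ = 2 ^ (1/p) * p ^ (1/p) * (max R₁ R₂) ^ (1/p) := by
          rw [Real.mul_rpow (by positivity) hmax0, Real.mul_rpow (by norm_num) hp0.le]
      _ ≤ 2 * Real.exp 1 * (max A 1 * M + max (2 * C₂ * D) 1 * K₀ ^ β * M) := by
          apply mul_le_mul
            (mul_le_mul h2e hpe (Real.rpow_nonneg hp0.le _) (by norm_num))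
            hmaxr (Real.rpow_nonneg hmax0 _) (by positivity)
      _ = 2 * Real.exp 1 * (max A 1 + max (2 * C₂ * D) 1 * K₀ ^ β) * M := by ring
  -- put it all together in ℝ≥0∞
  calc (ENNReal.ofReal p *
        ∫⁻ t in Ioi (0:ℝ), μ {x | t < |f x|} * ENNReal.ofReal (t ^ (p - 1))) ^ (1/p)
      ≤ (ENNReal.ofReal p * ENNReal.ofReal (R₁ + R₂)) ^ (1/p) :=
        ENNReal.rpow_le_rpow (mul_le_mul_right htot _) (by positivity)
    _ = (ENNReal.ofReal (p * (R₁ + R₂))) ^ (1/p) := by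
        rw [← ENNReal.ofReal_mul hp0.le]
    _ = ENNReal.ofReal ((p * (R₁ + R₂)) ^ (1/p)) :=
        ENNReal.ofReal_rpow_of_pos (by nlinarith)
    _ ≤ ENNReal.ofReal
          (2 * Real.exp 1 * (max A 1 + max (2 * C₂ * D) 1 * K₀ ^ β) * M) :=
        ENNReal.ofReal_le_ofReal hfinal
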